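/- arXiv:2508.12607 — 4 statements merged into one kernel-verified Lean document; each statement's English description precedes it below -/
import Mathlib

section
/- Let G be a finite simple graph having a connected component that is not a complete graph. Then there exists an internal vertex v of G such that η(G ∖ v) ≤ η(G) and η(G_v) < η(G). -/
/-- A maximal clique of a simple graph: a clique that is maximal under inclusion. -/
def MaxClq {V : Type*} (G : SimpleGraph V) (s : Set V) : Prop :=
  G.IsClique s ∧ ∀ t : Set V, G.IsClique t → s ⊆ t → s = t

/-- An internal vertex: a vertex lying in at least two (distinct) maximal cliques. -/
def InternalVtx {V : Type*} (G : SimpleGraph V) (v : V) : Prop :=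
  ∃ s t : Set V, MaxClq G s ∧ MaxClq G t ∧ s ≠ t ∧ v ∈ s ∧ v ∈ t

/-- `iv G`: the number of internal vertices of `G`. -/
noncomputable def ivNum {V : Type*} (G : SimpleGraph V) : ℕ :=
  {v : V | InternalVtx G v}.ncard

/-- `c G`: the number of connected components of `G`. -/
noncomputable def compNum {V : Type*} (G : SimpleGraph V) : ℕ :=
  Nat.card G.ConnectedComponent

/-- `𝒞 G`: the number of maximal cliques of `G`. -/
noncomputable def maxClqNum {V : Type*} (G : SimpleGraph V) : ℕ :=
  {s : Set V | MaxClq G s}.ncard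

/-- `ω G`: the clique number of `G`, the maximum size of a clique. -/
noncomputable def clqNum {V : Type*} (G : SimpleGraph V) : ℕ :=
  sSup {k : ℕ | ∃ s : Set V, G.IsClique s ∧ s.ncard = k}

/-- A set of edges of `G` is clique-disjoint if no two distinct edges of it are both
contained in a single clique of `G`. -/
def CliqueDisjointEdges {V : Type*} (G : SimpleGraph V) (E : Set (Sym2 V)) : Prop :=
  E ⊆ G.edgeSet ∧ ∀ e ∈ E, ∀ f ∈ E, e ≠ f →
    ¬ ∃ s : Set V, G.IsClique s ∧ (∀ x ∈ e, x ∈ s) ∧ (∀ x ∈ f, x ∈ s)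

/-- `η G`: the maximum cardinality of a clique-disjoint set of edges of `G`. -/
noncomputable def etaNum {V : Type*} (G : SimpleGraph V) : ℕ :=
  sSup {k : ℕ | ∃ E : Set (Sym2 V), CliqueDisjointEdges G E ∧ E.ncard = k}

/-- `G_v`: the graph on the same vertex set as `G` whose edges are those of `G` together
with all edges between distinct neighbours of `v`. -/
def addNbrEdges {V : Type*} (G : SimpleGraph V) (v : V) : SimpleGraph V where
  Adj a b := G.Adj a b ∨ (a ≠ b ∧ G.Adj v a ∧ G.Adj v b)
  symm := by
    constructor
    intro a b h
    rcases h with h | ⟨hne, h1, h2⟩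
    · exact Or.inl h.symm
    · exact Or.inr ⟨hne.symm, h2, h1⟩
  loopless := by
    constructor
    intro a h
    rcases h with h | ⟨hne, _, _⟩
    · exact G.irrefl h
    · exact hne rfl


open Set

section Helpers

variable {V : Type*}

lemma cde_empty (G : SimpleGraph V) : CliqueDisjointEdges G (∅ : Set (Sym2 V)) :=
  ⟨Set.empty_subset _, by intro e he; exact absurd he (Set.notMem_empty e)⟩

lemma eta_bddAbove [Finite V] (G : SimpleGraph V) :
    BddAbove {k : ℕ | ∃ E : Set (Sym2 V), CliqueDisjointEdges G E ∧ E.ncard = k} := by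
  refine ⟨Nat.card (Sym2 V), ?_⟩
  rintro k ⟨E, _, rfl⟩
  simpa [Set.ncard_univ] using Set.ncard_le_ncard (Set.subset_univ E) Set.finite_univ

lemma eta_le [Finite V] (G : SimpleGraph V) {E : Set (Sym2 V)} (h : CliqueDisjointEdges G E) :
    E.ncard ≤ etaNum G :=
  le_csSup (eta_bddAbove G) ⟨E, h, rfl⟩

lemma eta_exists [Finite V] (G : SimpleGraph V) :
    ∃ E : Set (Sym2 V), CliqueDisjointEdges G E ∧ E.ncard = etaNum G := by
  have h0 : (0 : ℕ) ∈ {k : ℕ | ∃ E : Set (Sym2 V), CliqueDisjointEdges G E ∧ E.ncard = k} :=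
    ⟨∅, cde_empty G, by simp⟩
  exact Nat.sSup_mem ⟨0, h0⟩ (eta_bddAbove G)

lemma exists_maxclq_superset [Finite V] (G : SimpleGraph V) {c : Set V} (hc : G.IsClique c) :
    ∃ s, MaxClq G s ∧ c ⊆ s := by
  obtain ⟨s, hs, hmax⟩ := Set.Finite.exists_maximalFor (id : Set V → Set V)
    {t : Set V | G.IsClique t ∧ c ⊆ t} (Set.toFinite _) ⟨c, hc, subset_rfl⟩
  exact ⟨s, ⟨hs.1, fun t ht hst => hst.antisymm (hmax ⟨ht, hs.2.trans hst⟩ hst)⟩, hs.2⟩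

lemma exists_mid (G : SimpleGraph V) (n : ℕ) : ∀ u w : V, G.dist u w = n → G.Reachable u w →
    2 ≤ n → ∃ v a b : V, a ≠ b ∧ ¬ G.Adj a b ∧ G.Adj v a ∧ G.Adj v b := by
  induction n using Nat.strong_induction_on with
  | _ n ih =>
    intro u w hd hr h2
    obtain ⟨p, hp⟩ := hr.exists_walk_length_eq_dist
    rw [hd] at hp
    cases p with
    | nil => simp at hp; omega
    | @cons _ m _ h q =>
      simp only [SimpleGraph.Walk.length_cons] at hp
      have hle : G.dist m w ≤ n - 1 := by
        have := SimpleGraph.dist_le q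
        omega
      have hge : n - 1 ≤ G.dist m w := by
        obtain ⟨r, hr'⟩ := SimpleGraph.Reachable.exists_walk_length_eq_dist (⟨q⟩ : G.Reachable m w)
        have := SimpleGraph.dist_le (SimpleGraph.Walk.cons h r)
        simp only [SimpleGraph.Walk.length_cons, hr'] at this
        omega
      have hmw : G.dist m w = n - 1 := le_antisymm hle hge
      by_cases hn : n = 2
      · refine ⟨m, u, w, ?_, ?_, h.symm, ?_⟩
        · intro huw
          rw [huw, SimpleGraph.dist_self] at hd
          omega
        · intro hadj
          rw [SimpleGraph.dist_eq_one_iff_adj.mpr hadj] at hd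
          omega
        · exact SimpleGraph.dist_eq_one_iff_adj.mp (by omega)
      · exact ih (n - 1) (by omega) m w hmw ⟨q⟩ (by omega)

lemma eta_induce_le [Finite V] (G : SimpleGraph V) (S : Set V) :
    etaNum (G.induce S) ≤ etaNum G := by
  obtain ⟨E, ⟨hE1, hE2⟩, hcard⟩ := eta_exists (G.induce S)
  rw [← hcard]
  have hinj : Function.Injective (Sym2.map (Subtype.val : S → V)) :=
    Sym2.map.injective Subtype.val_injective
  rw [← Set.ncard_image_of_injective E hinj]
  apply eta_le
  constructor
  · rintro e ⟨e₀, he₀, rfl⟩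
    induction e₀ using Sym2.ind with
    | _ a b =>
      have h1 := hE1 he₀
      simp only [SimpleGraph.mem_edgeSet, SimpleGraph.comap_adj,
        Function.Embedding.coe_subtype] at h1
      simpa [Sym2.map_pair_eq] using h1
  · rintro e ⟨e₀, he₀, rfl⟩ f ⟨f₀, hf₀, rfl⟩ hne ⟨s, hs, hes, hfs⟩
    refine hE2 e₀ he₀ f₀ hf₀ (fun hh => hne (by rw [hh])) ⟨{x : S | ↑x ∈ s}, ?_, ?_, ?_⟩
    · intro x hx y hy hxy
      have hadj : G.Adj ↑x ↑y := hs hx hy (fun hh => hxy (Subtype.ext hh))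
      simpa [SimpleGraph.comap_adj] using hadj
    · intro x hx
      exact hes ↑x (Sym2.mem_map.mpr ⟨x, hx, rfl⟩)
    · intro x hx
      exact hfs ↑x (Sym2.mem_map.mpr ⟨x, hx, rfl⟩)

end Helpers

/-- if some connected component of `G` is not a complete graph, then there is
an internal vertex `v` with `η(G ∖ v) ≤ η(G)` and `η(G_v) < η(G)`. -/
theorem stmt6 {V : Type*} [Finite V] (G : SimpleGraph V)
    (h : ∃ u w : V, u ≠ w ∧ G.Reachable u w ∧ ¬ G.Adj u w) :
    ∃ v : V, InternalVtx G v ∧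
      etaNum (G.induce {u : V | u ≠ v}) ≤ etaNum G ∧
      etaNum (addNbrEdges G v) < etaNum G := by
  obtain ⟨u0, w0, hne0, hr0, hna0⟩ := h
  have hd2 : 2 ≤ G.dist u0 w0 := by
    have h1 := hr0.pos_dist_of_ne hne0
    have h2 : G.dist u0 w0 ≠ 1 := fun hh => hna0 (SimpleGraph.dist_eq_one_iff_adj.mp hh)
    omega
  obtain ⟨v, u, w, huw, hnauw, hvu, hvw⟩ := exists_mid G (G.dist u0 w0) u0 w0 rfl hr0 hd2
  have hvu' : v ≠ u := G.ne_of_adj hvu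
  have hvw' : v ≠ w := G.ne_of_adj hvw
  refine ⟨v, ?_, eta_induce_le G _, ?_⟩
  · -- v is internal
    have hc1 : G.IsClique ({v, u} : Set V) := by
      intro x hx y hy hxy
      rcases hx with rfl | hx <;> rcases hy with rfl | hy <;>
        first
          | exact absurd rfl hxy
          | (rw [Set.mem_singleton_iff] at *; subst hy; exact hvu)
          | (rw [Set.mem_singleton_iff] at *; subst hx; exact hvu.symm)
          | (rw [Set.mem_singleton_iff] at *; subst hx; subst hy; exact absurd rfl hxy)
    have hc2 : G.IsClique ({v, w} : Set V) := by
      intro x hx y hy hxy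
      rcases hx with rfl | hx <;> rcases hy with rfl | hy <;>
        first
          | exact absurd rfl hxy
          | (rw [Set.mem_singleton_iff] at *; subst hy; exact hvw)
          | (rw [Set.mem_singleton_iff] at *; subst hx; exact hvw.symm)
          | (rw [Set.mem_singleton_iff] at *; subst hx; subst hy; exact absurd rfl hxy)
    obtain ⟨s, hs, hsub⟩ := exists_maxclq_superset G hc1
    obtain ⟨t, ht, htub⟩ := exists_maxclq_superset G hc2
    refine ⟨s, t, hs, ht, ?_, hsub (Set.mem_insert _ _), htub (Set.mem_insert _ _)⟩
    intro hst
    have hu : u ∈ s := hsub (by simp)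
    have hw : w ∈ s := hst ▸ htub (by simp)
    exact hnauw (hs.1 hu hw huw)
  · -- strict inequality
    obtain ⟨E, ⟨hE1, hE2⟩, hcard⟩ := eta_exists (addNbrEdges G v)
    set N : Set V := {x | x = v ∨ G.Adj v x} with hN
    have hNclq : (addNbrEdges G v).IsClique N := by
      intro x hx y hy hxy
      rcases hx with rfl | hx
      · rcases hy with rfl | hy
        · exact absurd rfl hxy
        · exact Or.inl hy
      · rcases hy with rfl | hy
        · exact Or.inl hx.symm
        · exact Or.inr ⟨hxy, hx, hy⟩
    set B : Set (Sym2 V) := {e | e ∈ E ∧ ∀ x ∈ e, x ∈ N} with hB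
    have hBsub : B ⊆ E := fun e he => he.1
    have hBss : B.ncard ≤ 1 := by
      rw [Set.ncard_le_one (Set.toFinite _)]
      intro e he f hf
      by_contra hef
      exact hE2 e he.1 f hf.1 hef ⟨N, hNclq, he.2, hf.2⟩
    set E' : Set (Sym2 V) := E \ B with hE'
    have hvuN : ∀ x ∈ (s(v,u) : Sym2 V), x ∈ N := by
      intro x hx
      rcases Sym2.mem_iff.mp hx with rfl | rfl
      · exact Or.inl rfl
      · exact Or.inr hvu
    have hvwN : ∀ x ∈ (s(v,w) : Sym2 V), x ∈ N := by
      intro x hx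
      rcases Sym2.mem_iff.mp hx with rfl | rfl
      · exact Or.inl rfl
      · exact Or.inr hvw
    have hedge_ne : (s(v,u) : Sym2 V) ≠ s(v,w) := by
      intro hh
      rcases Sym2.eq_iff.mp hh with ⟨_, h2⟩ | ⟨h1, _⟩
      · exact huw h2
      · exact hvw' h1
    have hvu_notE' : (s(v,u) : Sym2 V) ∉ E' := fun hh => hh.2 ⟨hh.1, hvuN⟩
    have hvw_notE' : (s(v,w) : Sym2 V) ∉ E' := fun hh => hh.2 ⟨hh.1, hvwN⟩
    set F : Set (Sym2 V) := insert (s(v,u) : Sym2 V) (insert (s(v,w) : Sym2 V) E') with hF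
    have hmono : ∀ s : Set V, G.IsClique s → (addNbrEdges G v).IsClique s :=
      fun s hs x hx y hy hxy => Or.inl (hs hx hy hxy)
    have hE'edge : E' ⊆ G.edgeSet := by
      intro e he
      induction e using Sym2.ind with
      | _ a b =>
        have hadj := (SimpleGraph.mem_edgeSet _).mp (hE1 he.1)
        rcases hadj with h' | ⟨_, h1, h2⟩
        · exact h'
        · exact absurd ⟨he.1, by
            intro x hx
            rcases Sym2.mem_iff.mp hx with rfl | rfl
            · exact Or.inr h1
            · exact Or.inr h2⟩ he.2
    have hkey : ∀ e ∈ E', ∀ s : Set V, G.IsClique s → (∀ x ∈ e, x ∈ s) → v ∈ s → False := by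
      intro e he s hs hes hvs
      apply he.2
      refine ⟨he.1, fun x hx => ?_⟩
      by_cases hxv : x = v
      · exact Or.inl hxv
      · exact Or.inr (hs hvs (hes x hx) (fun hh => hxv hh.symm))
    have hFcde : CliqueDisjointEdges G F := by
      constructor
      · intro e he
        rcases he with rfl | he
        · exact (SimpleGraph.mem_edgeSet _).mpr hvu
        · rcases he with rfl | he
          · exact (SimpleGraph.mem_edgeSet _).mpr hvw
          · exact hE'edge he
      · intro e he f hf hef hcon
        obtain ⟨s, hs, hes, hfs⟩ := hcon
        have pairCase : ∀ a : V, G.Adj v a → ∀ g ∈ E', (∀ x ∈ g, x ∈ s) →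
            (∀ x ∈ (s(v,a) : Sym2 V), x ∈ s) → False := by
          intro a _ g hg hgs hvas
          exact hkey g hg s hs hgs (hvas v (Sym2.mem_mk_left v a))
        rcases he with rfl | he
        · rcases hf with rfl | hf
          · exact hef rfl
          · rcases hf with rfl | hf
            · exact hnauw (hs (hes u (Sym2.mem_mk_right v u)) (hfs w (Sym2.mem_mk_right v w)) huw)
            · exact pairCase u hvu f hf hfs hes
        · rcases hf with rfl | hf
          · rcases he with rfl | he
            · exact hnauw (hs (hfs u (Sym2.mem_mk_right v u)) (hes w (Sym2.mem_mk_right v w)) huw)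
            · exact pairCase u hvu e he hes hfs
          · rcases hf with rfl | hf
            · rcases he with rfl | he
              · exact hef rfl
              · exact pairCase w hvw e he hes hfs
            · rcases he with rfl | he
              · exact pairCase w hvw f hf hfs hes
              · exact hE2 e he.1 f hf.1 hef ⟨s, hmono s hs, hes, hfs⟩
    have h1 : (insert (s(v,w) : Sym2 V) E').ncard = E'.ncard + 1 :=
      Set.ncard_insert_of_notMem hvw_notE' (Set.toFinite _)
    have hnotin : (s(v,u) : Sym2 V) ∉ insert (s(v,w) : Sym2 V) E' := by
      rintro (hh | hh)
      · exact hedge_ne hh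
      · exact hvu_notE' hh
    have h2 : F.ncard = E'.ncard + 2 := by
      rw [hF, Set.ncard_insert_of_notMem hnotin (Set.toFinite _), h1]
    have h3 : E'.ncard = E.ncard - B.ncard := Set.ncard_diff hBsub (Set.toFinite _)
    have h4 := eta_le G hFcde
    rw [← hcard]
    omega
end

section
/- Fix an integer m ≥ 2. The map ψ defined on finite simple graphs by ψ(G) = n(G) − c(G) is a (reg,m)-compatible map, i.e., it satisfies conditions (a), (b) and (c) of the definition of (reg,m)-compatibility. -/
/-- A map `ψ` from finite simple graphs to `ℕ` is `(reg, m)`-compatible if: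
(a) `ψ(Ĝ) ≤ ψ(G)` where `Ĝ` is obtained from `G` by deleting all isolated vertices;
(b) if every connected component of `G` is a complete graph on at least 2 vertices,
then `ψ(G) ≥ Σ_i min {m − 1, n_i − 1}` where the `n_i` are the component sizes;
(c) if some connected component of `G` is not complete, then there is an internal vertex
`v` with `ψ(G∖v) ≤ ψ(G)` and `ψ(G_v) < ψ(G)`, or with `ψ(G∖v) ≤ ψ(G)`,
`ψ(G_v) = ψ(G)` and `ψ(G_v∖v) < ψ(G)`. -/
def RegCompatible (m : ℕ) (ψ : ∀ (V : Type) [Finite V], SimpleGraph V → ℕ) : Prop :=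
  (∀ (V : Type) [Finite V] (G : SimpleGraph V),
      ψ _ (G.induce {u : V | ∃ w : V, G.Adj u w}) ≤ ψ V G) ∧
  (∀ (V : Type) [Finite V] (G : SimpleGraph V),
      (∀ u w : V, G.Reachable u w → u ≠ w → G.Adj u w) →
      (∀ u : V, ∃ w : V, u ≠ w ∧ G.Reachable u w) →
      ∑ᶠ c : G.ConnectedComponent, min (m - 1) (c.supp.ncard - 1) ≤ ψ V G) ∧
  (∀ (V : Type) [Finite V] (G : SimpleGraph V),
      (∃ u w : V, u ≠ w ∧ G.Reachable u w ∧ ¬ G.Adj u w) →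
      ∃ v : V, InternalVtx G v ∧
        ((ψ _ (G.induce {u : V | u ≠ v}) ≤ ψ V G ∧ ψ V (addNbrEdges G v) < ψ V G) ∨
          (ψ _ (G.induce {u : V | u ≠ v}) ≤ ψ V G ∧ ψ V (addNbrEdges G v) = ψ V G ∧
            ψ _ ((addNbrEdges G v).induce {u : V | u ≠ v}) < ψ V G)))

section Helpers

variable {V : Type} [Finite V]

lemma compNum_le_card (G : SimpleGraph V) : compNum G ≤ Nat.card V :=
  Nat.card_le_card_of_surjective G.connectedComponentMk
    (fun c => c.exists_rep)

/-- Deleting the vertices outside `S` decreases the number of components by at most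
the number of deleted vertices. -/
lemma comp_del (G : SimpleGraph V) (S : Set V) :
    compNum G ≤ compNum (G.induce S) + Nat.card ↥(Sᶜ) := by
  classical
  set f : (G.induce S).ConnectedComponent ⊕ ↥(Sᶜ) → G.ConnectedComponent :=
    Sum.elim (SimpleGraph.ConnectedComponent.map (SimpleGraph.Embedding.induce S).toHom)
      (fun u => G.connectedComponentMk u) with hf
  have hsurj : Function.Surjective f := by
    intro C
    obtain ⟨u, rfl⟩ := C.exists_rep
    by_cases hu : u ∈ S
    · exact ⟨Sum.inl ((G.induce S).connectedComponentMk ⟨u, hu⟩), rfl⟩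
    · exact ⟨Sum.inr ⟨u, hu⟩, rfl⟩
  calc compNum G ≤ Nat.card ((G.induce S).ConnectedComponent ⊕ ↥(Sᶜ)) :=
        Nat.card_le_card_of_surjective f hsurj
    _ = compNum (G.induce S) + Nat.card ↥(Sᶜ) := Nat.card_sum

/-- If every vertex can reach a vertex of `S`, deleting the complement of `S`
does not decrease the number of components. -/
lemma comp_ge (G : SimpleGraph V) (S : Set V)
    (h : ∀ u : V, ∃ w, w ∈ S ∧ G.Reachable u w) :
    compNum G ≤ compNum (G.induce S) := by
  apply Nat.card_le_card_of_surjective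
    (SimpleGraph.ConnectedComponent.map (SimpleGraph.Embedding.induce S).toHom)
  intro C
  obtain ⟨u, rfl⟩ := C.exists_rep
  obtain ⟨w, hw, hr⟩ := h u
  exact ⟨(G.induce S).connectedComponentMk ⟨w, hw⟩,
    SimpleGraph.ConnectedComponent.sound hr.symm⟩

lemma reach_addNbr {G : SimpleGraph V} {v x y : V}
    (h : (addNbrEdges G v).Reachable x y) : G.Reachable x y := by
  obtain ⟨p⟩ := h
  induction p with
  | nil => exact SimpleGraph.Reachable.refl _
  | cons h q ih =>
    refine SimpleGraph.Reachable.trans ?_ ih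
    rcases h with h | ⟨_, h1, h2⟩
    · exact h.reachable
    · exact h1.symm.reachable.trans h2.reachable

/-- The identity homomorphism from `G` to `G_v`. -/
def homAdd (G : SimpleGraph V) (v : V) : G →g addNbrEdges G v := ⟨id, fun h => Or.inl h⟩

@[simp] lemma homAdd_apply (G : SimpleGraph V) (v u : V) : homAdd G v u = u := rfl

lemma compNum_addNbr (G : SimpleGraph V) (v : V) :
    compNum (addNbrEdges G v) = compNum G := by
  set hhom : G →g addNbrEdges G v := homAdd G v with hhomdef
  have key : ∀ u w : V,
      SimpleGraph.ConnectedComponent.map hhom (G.connectedComponentMk u) =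
        SimpleGraph.ConnectedComponent.map hhom (G.connectedComponentMk w) →
      G.connectedComponentMk u = G.connectedComponentMk w := by
    intro u w h
    simp only [SimpleGraph.ConnectedComponent.map_mk, hhomdef, homAdd_apply] at h
    exact SimpleGraph.ConnectedComponent.sound
      (reach_addNbr (SimpleGraph.ConnectedComponent.eq.mp h))
  refine (Nat.card_eq_of_bijective (SimpleGraph.ConnectedComponent.map hhom) ⟨?_, ?_⟩).symm
  · intro C D
    obtain ⟨u, rfl⟩ := C.exists_rep
    obtain ⟨w, rfl⟩ := D.exists_rep
    exact key u w
  · intro C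
    obtain ⟨u, rfl⟩ := C.exists_rep
    refine ⟨G.connectedComponentMk u, ?_⟩
    show SimpleGraph.ConnectedComponent.map hhom (G.connectedComponentMk u) =
      (addNbrEdges G v).connectedComponentMk u
    rw [SimpleGraph.ConnectedComponent.map_mk, hhomdef, homAdd_apply]

lemma exists_maxclq (G : SimpleGraph V) {s : Set V} (hs : G.IsClique s) :
    ∃ t, MaxClq G t ∧ s ⊆ t := by
  obtain ⟨t, ⟨ht, hst⟩, hmax⟩ :=
    Set.Finite.exists_maximalFor id {t : Set V | G.IsClique t ∧ s ⊆ t}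
      (Set.toFinite _) ⟨s, hs, subset_rfl⟩
  exact ⟨t, ⟨ht, fun t' ht' htt' => htt'.antisymm (hmax ⟨ht', hst.trans htt'⟩ htt')⟩, hst⟩

lemma internal_of {G : SimpleGraph V} {v a b : V} (h1 : G.Adj v a) (h2 : G.Adj v b)
    (hab : a ≠ b) (hnab : ¬ G.Adj a b) : InternalVtx G v := by
  have hc1 : G.IsClique {v, a} := SimpleGraph.isClique_pair.mpr fun _ => h1
  have hc2 : G.IsClique {v, b} := SimpleGraph.isClique_pair.mpr fun _ => h2
  obtain ⟨t1, ht1, hs1⟩ := exists_maxclq G hc1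
  obtain ⟨t2, ht2, hs2⟩ := exists_maxclq G hc2
  refine ⟨t1, t2, ht1, ht2, ?_, hs1 (by simp), hs2 (by simp)⟩
  rintro rfl
  exact hnab (ht1.1 (hs1 (by simp)) (hs2 (by simp)) hab)

lemma find_triple {G : SimpleGraph V} :
    ∀ {u w : V}, G.Walk u w → u ≠ w → ¬ G.Adj u w →
      ∃ v a b : V, G.Adj v a ∧ G.Adj v b ∧ a ≠ b ∧ ¬ G.Adj a b := by
  intro u w p
  induction p with
  | nil => intro h _; exact absurd rfl h
  | @cons u x w h q ih =>
    intro hne hadj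
    by_cases hxw : x = w
    · subst hxw; exact absurd h hadj
    · by_cases haxw : G.Adj x w
      · exact ⟨x, u, w, h.symm, haxw, hne, hadj⟩
      · exact ih hxw haxw

lemma card_ne (v : V) : Nat.card ↥({u : V | u ≠ v}) + 1 = Nat.card V := by
  have h1 : ({u : V | u ≠ v} : Set V) = {v}ᶜ := by ext u; simp
  have h2 := Set.ncard_add_ncard_compl ({v} : Set V)
  rw [h1, Nat.card_coe_set_eq]
  rw [Set.ncard_singleton] at h2
  omega

/-- If `G` has an edge then it has fewer components than vertices. -/
lemma compNum_lt {G : SimpleGraph V} {v a : V} (hva : G.Adj v a) :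
    compNum G + 1 ≤ Nat.card V := by
  have h1 : compNum G ≤ compNum (G.induce {u : V | u ≠ a}) := by
    apply comp_ge
    intro u
    by_cases hu : u = a
    · exact ⟨v, hva.ne, by rw [hu]; exact hva.symm.reachable⟩
    · exact ⟨u, hu, SimpleGraph.Reachable.refl _⟩
  have h2 := compNum_le_card (G.induce {u : V | u ≠ a})
  have h3 := card_ne (V := V) a
  omega

end Helpers

/-- for every integer `m ≥ 2`, the map `G ↦ n(G) − c(G)` is
`(reg, m)`-compatible. -/
theorem stmt7 (m : ℕ) (hm : 2 ≤ m) :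
    RegCompatible m (fun V _ G => Nat.card V - compNum G) := by
  refine ⟨?_, ?_, ?_⟩
  · -- (a)
    intro V _ G
    simp only
    have h1 := comp_del G {u : V | ∃ w, G.Adj u w}
    have h2 : Nat.card ↥({u : V | ∃ w, G.Adj u w}) +
        Nat.card ↥({u : V | ∃ w, G.Adj u w}ᶜ) = Nat.card V := by
      rw [Nat.card_coe_set_eq, Nat.card_coe_set_eq]
      exact Set.ncard_add_ncard_compl _
    omega
  · -- (b)
    intro V _ G _ _
    simp only
    classical
    have hV : Fintype V := Fintype.ofFinite V
    have hC : Fintype G.ConnectedComponent := Fintype.ofFinite _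
    rw [finsum_eq_sum_of_fintype]
    have hequiv : V ≃ Σ c : G.ConnectedComponent, c.supp :=
      { toFun := fun v => ⟨G.connectedComponentMk v, v, rfl⟩
        invFun := fun x => x.2.1
        left_inv := fun v => rfl
        right_inv := by
          rintro ⟨c, v, h⟩
          have h' : G.connectedComponentMk v = c := h
          subst h'
          rfl }
    have hcardV : Nat.card V = ∑ c : G.ConnectedComponent, (c.supp).ncard := by
      rw [Nat.card_congr hequiv, Nat.card_eq_fintype_card, Fintype.card_sigma]
      congr 1
      ext c
      rw [← Nat.card_coe_set_eq, Nat.card_eq_fintype_card]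
    have hpos : ∀ c : G.ConnectedComponent, 1 ≤ (c.supp).ncard := by
      intro c
      obtain ⟨v, hv⟩ := c.exists_rep
      have hmem : v ∈ c.supp := by
        rw [SimpleGraph.ConnectedComponent.mem_supp_iff]
        exact hv
      exact (Set.ncard_pos (Set.toFinite _)).mpr ⟨v, hmem⟩
    have hsum : (∑ c : G.ConnectedComponent, min (m - 1) ((c.supp).ncard - 1)) + compNum G ≤
        ∑ c : G.ConnectedComponent, (c.supp).ncard := by
      have : (∑ c : G.ConnectedComponent, min (m - 1) ((c.supp).ncard - 1)) + compNum G =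
          ∑ c : G.ConnectedComponent, (min (m - 1) ((c.supp).ncard - 1) + 1) := by
        rw [Finset.sum_add_distrib, Finset.sum_const, smul_eq_mul, mul_one,
          compNum, Nat.card_eq_fintype_card, Finset.card_univ]
      rw [this]
      refine Finset.sum_le_sum fun c _ => ?_
      have h1 := hpos c
      have h2 := min_le_right (m - 1) ((c.supp).ncard - 1)
      omega
    omega
  · -- (c)
    intro V _ G hyp
    simp only
    obtain ⟨u, w, hne, hreach, hnadj⟩ := hyp
    obtain ⟨p⟩ := hreach
    obtain ⟨v, a, b, hva, hvb, hab, hnab⟩ := find_triple p hne hnadj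
    refine ⟨v, internal_of hva hvb hab hnab, Or.inr ⟨?_, ?_, ?_⟩⟩
    · -- ψ(G∖v) ≤ ψ(G)
      have h1 := comp_del G {u : V | u ≠ v}
      have h2 : Nat.card ↥({u : V | u ≠ v}ᶜ) = 1 := by
        have : ({u : V | u ≠ v}ᶜ : Set V) = {v} := by ext u; simp
        rw [this, Nat.card_coe_set_eq, Set.ncard_singleton]
      have h3 := card_ne (V := V) v
      omega
    · -- ψ(G_v) = ψ(G)
      rw [compNum_addNbr]
    · -- ψ(G_v ∖ v) < ψ(G)
      have h1 : compNum (addNbrEdges G v) ≤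
          compNum ((addNbrEdges G v).induce {u : V | u ≠ v}) := by
        apply comp_ge
        intro u
        by_cases hu : u = v
        · subst hu
          exact ⟨a, hva.ne', SimpleGraph.Adj.reachable (Or.inl hva)⟩
        · exact ⟨u, hu, SimpleGraph.Reachable.refl _⟩
      have h2 := compNum_addNbr G v
      have h3 := compNum_lt hva
      have h4 := card_ne (V := V) v
      omega
end

section
/- Let G be a finite simple graph and v an internal vertex of G such that some clique of G of maximum size ω(G) contains v. Then every clique of G containing v is a proper subset of N_G(v) ∪ {v}, and ω(G_v) ≥ deg_G(v) + 1 > ω(G). -/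

lemma clique_subset_nbr {V : Type*} {G : SimpleGraph V} {v : V} {t : Set V}
    (ht : G.IsClique t) (hvt : v ∈ t) : t ⊆ insert v (G.neighborSet v) := by
  intro u hu
  by_cases h : u = v
  · rw [h]; exact Set.mem_insert v _
  · exact Set.mem_insert_of_mem _ ((ht hvt hu (fun e => h e.symm)))

lemma not_clique_insert_nbr {V : Type*} {G : SimpleGraph V} {v : V}
    (hv : InternalVtx G v) : ¬ G.IsClique (insert v (G.neighborSet v)) := by
  intro hcl
  obtain ⟨s, t, hs, ht, hne, hvs, hvt⟩ := hv
  have h1 : s = insert v (G.neighborSet v) := hs.2 _ hcl (clique_subset_nbr hs.1 hvs)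
  have h2 : t = insert v (G.neighborSet v) := ht.2 _ hcl (clique_subset_nbr ht.1 hvt)
  exact hne (h1.trans h2.symm)

lemma le_clqNum {V : Type*} [Finite V] {G : SimpleGraph V} {s : Set V}
    (hs : G.IsClique s) : s.ncard ≤ clqNum G := by
  apply le_csSup
  · refine ⟨Nat.card V, ?_⟩
    rintro k ⟨u, _, rfl⟩
    calc u.ncard ≤ (Set.univ : Set V).ncard := Set.ncard_le_ncard (Set.subset_univ u) (Set.toFinite _)
    _ = Nat.card V := Set.ncard_univ V
  · exact ⟨s, hs, rfl⟩

/-- if `v` is an internal vertex of `G` contained in some clique of maximum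
size `ω(G)`, then every clique of `G` containing `v` is a proper subset of `N_G(v) ∪ {v}`,
and `ω(G_v) ≥ deg_G(v) + 1 > ω(G)`. -/
theorem stmt12 {V : Type*} [Finite V] (G : SimpleGraph V) (v : V)
    (hv : InternalVtx G v)
    (hmax : ∃ s : Set V, G.IsClique s ∧ s.ncard = clqNum G ∧ v ∈ s) :
    (∀ t : Set V, G.IsClique t → v ∈ t → t ⊂ insert v (G.neighborSet v)) ∧
    (G.neighborSet v).ncard + 1 ≤ clqNum (addNbrEdges G v) ∧
    clqNum G < (G.neighborSet v).ncard + 1 := by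
  have key : ∀ t : Set V, G.IsClique t → v ∈ t → t ⊂ insert v (G.neighborSet v) := by
    intro t ht hvt
    refine ⟨clique_subset_nbr ht hvt, fun hsub => ?_⟩
    exact not_clique_insert_nbr hv (by
      have : insert v (G.neighborSet v) = t := Set.Subset.antisymm hsub (clique_subset_nbr ht hvt)
      exact this ▸ ht)
  have hvn : v ∉ G.neighborSet v := fun h => G.irrefl h
  have hcard : (insert v (G.neighborSet v)).ncard = (G.neighborSet v).ncard + 1 :=
    Set.ncard_insert_of_notMem hvn (Set.toFinite _)
  refine ⟨key, ?_, ?_⟩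
  · have hclq : (addNbrEdges G v).IsClique (insert v (G.neighborSet v)) := by
      rintro a (rfl | ha) b (rfl | hb) hab
      · exact absurd rfl hab
      · exact Or.inl hb
      · exact Or.inl ha.symm
      · exact Or.inr ⟨hab, ha, hb⟩
    calc (G.neighborSet v).ncard + 1 = (insert v (G.neighborSet v)).ncard := hcard.symm
    _ ≤ clqNum (addNbrEdges G v) := le_clqNum hclq
  · obtain ⟨s, hs, hcard', hvs⟩ := hmax
    calc clqNum G = s.ncard := hcard'.symm
    _ < (insert v (G.neighborSet v)).ncard := Set.ncard_lt_ncard (key s hs hvs) (Set.toFinite _)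
    _ = (G.neighborSet v).ncard + 1 := hcard
end

section
/- Let G be a finite simple graph and v an internal vertex of G. Then c(G_v) = c(G), c(G_v ∖ v) = c(G), and c(G ∖ v) ≥ c(G), where c denotes the number of connected components. -/
open SimpleGraph

/-- An equiv of connected components from agreement of reachability. -/
noncomputable def ccEquiv {V : Type*} (G H : SimpleGraph V)
    (h : ∀ a b : V, G.Reachable a b ↔ H.Reachable a b) :
    G.ConnectedComponent ≃ H.ConnectedComponent where
  toFun := ConnectedComponent.lift (fun x => H.connectedComponentMk x)
    (fun x y p _ => ConnectedComponent.sound ((h x y).1 p.reachable))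
  invFun := ConnectedComponent.lift (fun x => G.connectedComponentMk x)
    (fun x y p _ => ConnectedComponent.sound ((h x y).2 p.reachable))
  left_inv := by apply ConnectedComponent.ind; intro x; rfl
  right_inv := by apply ConnectedComponent.ind; intro x; rfl

lemma addNbr_reach {V : Type*} (G : SimpleGraph V) (v : V) (a b : V) :
    (addNbrEdges G v).Reachable a b ↔ G.Reachable a b := by
  constructor
  · rintro ⟨w⟩
    induction w with
    | nil => exact Reachable.refl _
    | cons h p ih =>
      refine Reachable.trans ?_ ih
      rcases h with h | ⟨_, h1, h2⟩
      · exact h.reachable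
      · exact (h1.symm.reachable).trans h2.reachable
  · intro h
    exact h.mono (fun a b hab => Or.inl hab)

lemma key_walk {V : Type*} (G : SimpleGraph V) (v : V)
    (hcl : ∀ a b, G.Adj v a → G.Adj v b → a ≠ b → G.Adj a b) :
    ∀ (n : ℕ) (a b : V) (w : G.Walk a b), w.length ≤ n → ∀ (ha : a ≠ v) (hb : b ≠ v),
      (G.induce {u : V | u ≠ v}).Reachable ⟨a, ha⟩ ⟨b, hb⟩ := by
  intro n
  induction n with
  | zero =>
    intro a b w hw ha hb
    cases w with
    | nil => exact Reachable.refl _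
    | cons h p => simp [Walk.length_cons] at hw
  | succ n ih =>
    intro a b w hw ha hb
    cases w with
    | nil => exact Reachable.refl _
    | cons h p =>
      rename_i c
      by_cases hc : c = v
      · cases p with
        | nil => exact absurd hc hb
        | cons h' q =>
          rename_i d
          have h2 : G.Adj a v := hc ▸ h
          have h3 : G.Adj v d := hc ▸ h'
          have hd : d ≠ v := fun hdv => G.irrefl (v := v) (hdv ▸ h3)
          have hr := ih d b q (by simp [Walk.length_cons] at hw ⊢; omega) hd hb
          by_cases had : a = d
          · exact (by rw [Subtype.mk_eq_mk.mpr had] : (⟨a, ha⟩ : {u : V | u ≠ v}) = ⟨d, hd⟩) ▸ hr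
          · have hadj : G.Adj a d := hcl a d h2.symm h3 had
            have : (G.induce {u : V | u ≠ v}).Adj ⟨a, ha⟩ ⟨d, hd⟩ := by
              simp [comap_adj, hadj]
            exact this.reachable.trans hr
      · have hr := ih c b p (by simp [Walk.length_cons] at hw; omega) hc hb
        have : (G.induce {u : V | u ≠ v}).Adj ⟨a, ha⟩ ⟨c, hc⟩ := by
          simp [comap_adj, h]
        exact this.reachable.trans hr


/-- if `v` is an internal vertex of `G`, then `c(G_v) = c(G)`,
`c(G_v ∖ v) = c(G)` and `c(G ∖ v) ≥ c(G)`. -/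
theorem stmt13 {V : Type*} [Finite V] (G : SimpleGraph V) (v : V)
    (hv : InternalVtx G v) :
    compNum (addNbrEdges G v) = compNum G ∧
    compNum ((addNbrEdges G v).induce {u : V | u ≠ v}) = compNum G ∧
    compNum G ≤ compNum (G.induce {u : V | u ≠ v}) := by
  -- v has a neighbour
  obtain ⟨s, t, hs, ht, hst, hvs, hvt⟩ := hv
  have hnbr : ∃ w : V, w ≠ v ∧ G.Adj v w := by
    by_cases hsub : ∃ w ∈ s, w ∉ t
    · obtain ⟨w, hws, hwt⟩ := hsub
      have hwv : w ≠ v := fun h => hwt (h ▸ hvt)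
      exact ⟨w, hwv, hs.1 hvs hws (Ne.symm hwv)⟩
    · push_neg at hsub
      obtain ⟨w, hws, hwt⟩ : ∃ w ∈ t, w ∉ s := by
        by_contra hc
        push_neg at hc
        exact hst (Set.Subset.antisymm hsub hc)
      have hwv : w ≠ v := fun h => hwt (h ▸ hvs)
      exact ⟨w, hwv, ht.1 hvt hws (Ne.symm hwv)⟩
  obtain ⟨w, hwv, hadjvw⟩ := hnbr
  have hcl : ∀ a b, (addNbrEdges G v).Adj v a → (addNbrEdges G v).Adj v b → a ≠ b →
      (addNbrEdges G v).Adj a b := by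
    intro a b ha hb hab
    have ha' : G.Adj v a := by rcases ha with h | ⟨_, _, h⟩ <;> exact h
    have hb' : G.Adj v b := by rcases hb with h | ⟨_, _, h⟩ <;> exact h
    exact Or.inr ⟨hab, ha', hb'⟩
  refine ⟨?_, ?_, ?_⟩
  · exact Nat.card_congr (ccEquiv _ _ (addNbr_reach G v))
  · -- c(G_v \ v) = c(G)
    have fwd : ∀ (x y : {u : V | u ≠ v})
        (p : ((addNbrEdges G v).induce {u : V | u ≠ v}).Walk x y),
        G.connectedComponentMk x.1 = G.connectedComponentMk y.1 := by
      intro x y p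
      induction p with
      | nil => rfl
      | cons h p ih =>
        have h' : (addNbrEdges G v).Adj _ _ := h
        exact Eq.trans (ConnectedComponent.sound ((addNbr_reach G v _ _).1 h'.reachable)) ih
    let f : ((addNbrEdges G v).induce {u : V | u ≠ v}).ConnectedComponent →
        G.ConnectedComponent :=
      ConnectedComponent.lift (fun x => G.connectedComponentMk x.1)
        (fun x y p _ => fwd x y p)
    have hinj : Function.Injective f := by
      intro c d
      refine ConnectedComponent.ind₂ (fun x y hxy => ?_) c d
      have hr : G.Reachable x.1 y.1 := (SimpleGraph.ConnectedComponent.eq).1 hxy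
      have hr2 : (addNbrEdges G v).Reachable x.1 y.1 := (addNbr_reach G v _ _).2 hr
      obtain ⟨wlk⟩ := hr2
      exact ConnectedComponent.sound
        (key_walk (addNbrEdges G v) v hcl wlk.length x.1 y.1 wlk le_rfl x.2 y.2)
    have hsurj : Function.Surjective f := by
      refine ConnectedComponent.ind (fun x => ?_)
      by_cases hx : x = v
      · refine ⟨((addNbrEdges G v).induce {u : V | u ≠ v}).connectedComponentMk ⟨w, hwv⟩, ?_⟩
        show G.connectedComponentMk w = G.connectedComponentMk x
        rw [hx]
        exact ConnectedComponent.sound hadjvw.symm.reachable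
      · exact ⟨((addNbrEdges G v).induce {u : V | u ≠ v}).connectedComponentMk ⟨x, hx⟩, rfl⟩
    exact Nat.card_congr (Equiv.ofBijective f ⟨hinj, hsurj⟩)
  · -- c(G) ≤ c(G \ v)
    have fwd : ∀ (x y : {u : V | u ≠ v})
        (p : (G.induce {u : V | u ≠ v}).Walk x y),
        G.connectedComponentMk x.1 = G.connectedComponentMk y.1 := by
      intro x y p
      induction p with
      | nil => rfl
      | cons h p ih =>
        have h' : G.Adj _ _ := h
        exact Eq.trans (ConnectedComponent.sound h'.reachable) ih
    let g : (G.induce {u : V | u ≠ v}).ConnectedComponent → G.ConnectedComponent :=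
      ConnectedComponent.lift (fun x => G.connectedComponentMk x.1)
        (fun x y p _ => fwd x y p)
    have hsurj : Function.Surjective g := by
      refine ConnectedComponent.ind (fun x => ?_)
      by_cases hx : x = v
      · refine ⟨(G.induce {u : V | u ≠ v}).connectedComponentMk ⟨w, hwv⟩, ?_⟩
        show G.connectedComponentMk w = G.connectedComponentMk x
        rw [hx]
        exact ConnectedComponent.sound hadjvw.symm.reachable
      · exact ⟨(G.induce {u : V | u ≠ v}).connectedComponentMk ⟨x, hx⟩, rfl⟩
    exact Nat.card_le_card_of_surjective g hsurj
end
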